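/- Let f be a continuous function from the infinite subsets of ℕ (product topology) to c₀ (topology of pointwise convergence on ℕ), written M ↦ f_M, such that every sequence in the image of f has a cluster point in c₀. Then for every ε > 0 and every infinite subset M of ℕ there exists an infinite subset N of M such that for all infinite subsets P of N, ∑_{i ∈ N \ P} |f_P(i)| ≤ ε. -/

import Mathlib

open Filter Set Topology

namespace SupportStab

lemma inter_Ioi_infinite {A : Set ℕ} (hA : A.Infinite) (n : ℕ) : (A ∩ Set.Ioi n).Infinite := by
  apply (hA.diff (Set.finite_Iic n)).mono
  rintro m ⟨hm1, hm2⟩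
  exact ⟨hm1, by simpa [Set.mem_Iic, not_le] using hm2⟩

section GP

variable (S : Set (Set ℕ))

/-- `A` accepts `s` : every infinite subset of `A`, together with `s`, lands in `S`. -/
def Acpt (s : Finset ℕ) (A : Set ℕ) : Prop :=
  ∀ Q : Set ℕ, Q ⊆ A → Q.Infinite → (↑s ∪ Q) ∈ S

/-- `A` rejects `s` : no infinite subset of `A` accepts `s`. -/
def Rej (s : Finset ℕ) (A : Set ℕ) : Prop :=
  ∀ B : Set ℕ, B ⊆ A → B.Infinite → ¬ Acpt S s B

variable {S}

lemma Acpt.mono {s : Finset ℕ} {A B : Set ℕ} (h : Acpt S s A) (hBA : B ⊆ A) : Acpt S s B :=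
  fun Q hQ hQi => h Q (hQ.trans hBA) hQi

lemma Rej.mono {s : Finset ℕ} {A B : Set ℕ} (h : Rej S s A) (hBA : B ⊆ A) : Rej S s B :=
  fun C hC hCi => h C (hC.trans hBA) hCi

lemma dec (s : Finset ℕ) (A : Set ℕ) (hA : A.Infinite) :
    ∃ B, B ⊆ A ∧ B.Infinite ∧ (Acpt S s B ∨ Rej S s B) := by
  by_cases h : ∃ B, B ⊆ A ∧ B.Infinite ∧ Acpt S s B
  · obtain ⟨B, h1, h2, h3⟩ := h; exact ⟨B, h1, h2, Or.inl h3⟩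
  · exact ⟨A, subset_rfl, hA, Or.inr fun B h1 h2 h3 => h ⟨B, h1, h2, h3⟩⟩

lemma onestep {s : Finset ℕ} {A : Set ℕ} (hA : A.Infinite) (hrej : Rej S s A) :
    ∃ B, B ⊆ A ∧ B.Infinite ∧ ∀ n ∈ B, Rej S (insert n s) (B ∩ Set.Ioi n) := by
  classical
  let T := {C : Set ℕ // C.Infinite ∧ C ⊆ A}
  have stepEx : ∀ C : T, ∃ D : Set ℕ, D ⊆ C.1 ∩ Set.Ioi (sInf C.1) ∧ D.Infinite ∧
      (Acpt S (insert (sInf C.1) s) D ∨ Rej S (insert (sInf C.1) s) D) :=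
    fun C => dec _ _ (inter_Ioi_infinite C.2.1 _)
  let step : T → T := fun C => ⟨(stepEx C).choose,
    (stepEx C).choose_spec.2.1,
    ((stepEx C).choose_spec.1.trans Set.inter_subset_left).trans C.2.2⟩
  let seq : ℕ → T := fun k => Nat.rec ⟨A, hA, subset_rfl⟩ (fun _ st => step st) k
  have hsub : ∀ k, (seq (k+1)).1 ⊆ (seq k).1 ∩ Set.Ioi (sInf (seq k).1) :=
    fun k => (stepEx (seq k)).choose_spec.1
  have hor : ∀ k, Acpt S (insert (sInf (seq k).1) s) ((seq (k+1)).1) ∨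
      Rej S (insert (sInf (seq k).1) s) ((seq (k+1)).1) :=
    fun k => (stepEx (seq k)).choose_spec.2.2
  set n : ℕ → ℕ := fun k => sInf (seq k).1 with hn
  have hmem : ∀ k, n k ∈ (seq k).1 := fun k => Nat.sInf_mem (seq k).2.1.nonempty
  have hchain : ∀ i k, i ≤ k → (seq k).1 ⊆ (seq i).1 := by
    intro i k hik
    induction k, hik using Nat.le_induction with
    | base => exact subset_rfl
    | succ m hm ih => exact ((hsub m).trans Set.inter_subset_left).trans ih
  have hnlt : StrictMono n := strictMono_nat_of_lt_succ fun k => (hsub k (hmem (k+1))).2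
  have hnA : ∀ k, n k ∈ A := fun k => (seq k).2.2 (hmem k)
  have hmemlater : ∀ i k, i < k → n k ∈ (seq (i+1)).1 := fun i k hik => hchain (i+1) k hik (hmem k)
  by_cases hJ : {k | Acpt S (insert (n k) s) ((seq (k+1)).1)}.Infinite
  · exfalso
    refine hrej (n '' {k | Acpt S (insert (n k) s) ((seq (k+1)).1)}) ?_
      (hJ.image hnlt.injective.injOn) ?_
    · rintro x ⟨k, _, rfl⟩; exact hnA k
    · intro Q hQ hQi
      have hmQ : sInf Q ∈ Q := Nat.sInf_mem hQi.nonempty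
      obtain ⟨j₀, hj₀, hmj⟩ := hQ hmQ
      have h1 : Q ∩ Set.Ioi (sInf Q) ⊆ (seq (j₀+1)).1 := by
        rintro q ⟨hq, hqm⟩
        obtain ⟨l, _, rfl⟩ := hQ hq
        exact hmemlater j₀ l (hnlt.lt_iff_lt.mp (by rw [hmj]; exact hqm))
      have h2 := hj₀ (Q ∩ Set.Ioi (sInf Q)) h1 (inter_Ioi_infinite hQi _)
      have hset : (↑(insert (n j₀) s) : Set ℕ) ∪ (Q ∩ Set.Ioi (sInf Q)) = ↑s ∪ Q := by
        ext x
        simp only [Finset.coe_insert, Set.mem_union, Set.mem_insert_iff, Set.mem_inter_iff,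
          Set.mem_Ioi, Finset.mem_coe]
        constructor
        · rintro ((rfl | hx) | ⟨hx, _⟩)
          · exact Or.inr (hmj ▸ hmQ)
          · exact Or.inl hx
          · exact Or.inr hx
        · rintro (hx | hx)
          · exact Or.inl (Or.inr hx)
          · rcases lt_or_eq_of_le (Nat.sInf_le hx) with h | h
            · exact Or.inr ⟨hx, h⟩
            · exact Or.inl (Or.inl (hmj.trans h).symm)
      rw [hset] at h2
      exact h2
  · obtain ⟨J₀, hJ₀⟩ : ∃ J₀, ∀ k, Acpt S (insert (n k) s) ((seq (k+1)).1) → k ≤ J₀ := by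
      obtain ⟨J₀, h⟩ := (Set.not_infinite.mp hJ).bddAbove
      exact ⟨J₀, fun k hk => h hk⟩
    refine ⟨n '' {k | J₀ < k}, ?_, ?_, ?_⟩
    · rintro x ⟨k, _, rfl⟩; exact hnA k
    · exact (Set.Ioi_infinite J₀).image hnlt.injective.injOn
    · rintro x ⟨k, (hk : J₀ < k), rfl⟩
      have hrejk : Rej S (insert (n k) s) ((seq (k+1)).1) :=
        (hor k).resolve_left fun hacc => absurd hk (not_lt.mpr (hJ₀ k hacc))
      refine hrejk.mono ?_
      rintro q ⟨⟨l, _, rfl⟩, hq2⟩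
      exact hmemlater k l (hnlt.lt_iff_lt.mp hq2)

lemma multistep (E : Finset (Finset ℕ)) :
    ∀ {A : Set ℕ}, A.Infinite → (∀ s ∈ E, Rej S s A) →
    ∃ B, B ⊆ A ∧ B.Infinite ∧ ∀ s ∈ E, ∀ n ∈ B, Rej S (insert n s) (B ∩ Set.Ioi n) := by
  classical
  induction E using Finset.induction_on with
  | empty => exact fun hA _ => ⟨_, subset_rfl, hA, by simp⟩
  | insert s₀ E' hnotmem ih =>
    intro A hA h
    obtain ⟨B₀, hB₀A, hB₀i, hB₀⟩ := onestep hA (h s₀ (Finset.mem_insert_self _ _))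
    obtain ⟨B, hBB₀, hBi, hB⟩ := ih hB₀i fun s hs => (h s (Finset.mem_insert_of_mem hs)).mono hB₀A
    refine ⟨B, hBB₀.trans hB₀A, hBi, ?_⟩
    intro s hs m hm
    rcases Finset.mem_insert.mp hs with rfl | hs
    · exact (hB₀ m (hBB₀ hm)).mono (Set.inter_subset_inter_left _ hBB₀)
    · exact hB s hs m hm

theorem gp (hS : ∀ P : Set ℕ, P.Infinite → P ∈ S → ∃ r, ∀ Q : Set ℕ, Q.Infinite →
      (∀ m ≤ r, (m ∈ Q ↔ m ∈ P)) → Q ∈ S)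
    (A : Set ℕ) (hA : A.Infinite) :
    ∃ B, B ⊆ A ∧ B.Infinite ∧
      ((∀ Q, Q ⊆ B → Q.Infinite → Q ∈ S) ∨ (∀ Q, Q ⊆ B → Q.Infinite → Q ∉ S)) := by
  classical
  by_cases hacc : ∃ B, B ⊆ A ∧ B.Infinite ∧ Acpt S ∅ B
  · obtain ⟨B, h1, h2, h3⟩ := hacc
    refine ⟨B, h1, h2, Or.inl fun Q hQ hQi => ?_⟩
    simpa using h3 Q hQ hQi
  · have hrej : Rej S ∅ A := fun B h1 h2 h3 => hacc ⟨B, h1, h2, h3⟩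
    let T := {p : Finset ℕ × Set ℕ // p.2.Infinite ∧ p.2 ⊆ A ∧
      (∀ t : Finset ℕ, t ⊆ p.1 → Rej S t p.2)}
    have stepEx : ∀ st : T, ∃ (m : ℕ) (B : Set ℕ), m ∈ st.1.2 ∧ B ⊆ st.1.2 ∧ B.Infinite ∧
        (∀ b ∈ B, m < b) ∧ ∀ t : Finset ℕ, t ⊆ st.1.1 → Rej S (insert m t) B := by
      rintro ⟨⟨F, C⟩, hCi, hCA, hrejall⟩
      obtain ⟨B', hB'C, hB'i, hB'⟩ := multistep F.powerset hCi
        (fun s hs => hrejall s (Finset.mem_powerset.mp hs))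
      refine ⟨sInf B', B' ∩ Set.Ioi (sInf B'), hB'C (Nat.sInf_mem hB'i.nonempty),
        (Set.inter_subset_left).trans hB'C, inter_Ioi_infinite hB'i _,
        fun b hb => hb.2, fun t ht => hB' t (Finset.mem_powerset.mpr ht) _ (Nat.sInf_mem hB'i.nonempty)⟩
    let mfun : T → ℕ := fun st => (stepEx st).choose
    let Bfun : T → Set ℕ := fun st => (stepEx st).choose_spec.choose
    have spec : ∀ st : T, mfun st ∈ st.1.2 ∧ Bfun st ⊆ st.1.2 ∧ (Bfun st).Infinite ∧
        (∀ b ∈ Bfun st, mfun st < b) ∧ ∀ t : Finset ℕ, t ⊆ st.1.1 → Rej S (insert (mfun st) t) (Bfun st) :=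
      fun st => (stepEx st).choose_spec.choose_spec
    let step : T → T := fun st => ⟨(insert (mfun st) st.1.1, Bfun st),
      (spec st).2.2.1, (spec st).2.1.trans st.2.2.1, by
        intro t ht
        by_cases hm : mfun st ∈ t
        · have : t = insert (mfun st) (t.erase (mfun st)) := (Finset.insert_erase hm).symm
          rw [this]
          exact (spec st).2.2.2.2 _ fun x hx => by
            have := ht (Finset.mem_of_mem_erase hx)
            rcases Finset.mem_insert.mp this with rfl | h
            · exact absurd rfl (Finset.ne_of_mem_erase hx)
            · exact h
        · have ht' : t ⊆ st.1.1 := fun x hx => by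
            rcases Finset.mem_insert.mp (ht hx) with rfl | h
            · exact absurd hx hm
            · exact h
          exact (st.2.2.2 t ht').mono (spec st).2.1⟩
    let seq : ℕ → T := fun k => Nat.rec ⟨(∅, A), hA, subset_rfl, fun t ht => by
      rw [Finset.subset_empty.mp ht]; exact hrej⟩ (fun _ st => step st) k
    set n : ℕ → ℕ := fun k => mfun (seq k) with hndef
    have hFsucc : ∀ k, (seq (k+1)).1.1 = insert (n k) (seq k).1.1 := fun k => rfl
    have hpoolsucc : ∀ k, (seq (k+1)).1.2 = Bfun (seq k) := fun k => rfl
    have hmem : ∀ k, n k ∈ (seq k).1.2 := fun k => (spec (seq k)).1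
    have hsub : ∀ k, (seq (k+1)).1.2 ⊆ (seq k).1.2 := fun k => (spec (seq k)).2.1
    have hgt : ∀ k, ∀ b ∈ (seq (k+1)).1.2, n k < b := fun k => (spec (seq k)).2.2.2.1
    have hchain : ∀ i k, i ≤ k → (seq k).1.2 ⊆ (seq i).1.2 := by
      intro i k hik
      induction k, hik using Nat.le_induction with
      | base => exact subset_rfl
      | succ m hm ih => exact (hsub m).trans ih
    have hnlt : StrictMono n := strictMono_nat_of_lt_succ fun k => hgt k _ (hmem (k+1))
    have hnA : ∀ k, n k ∈ A := fun k => (seq k).2.2.1 (hmem k)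
    have hF : ∀ k, (seq k).1.1 = (Finset.range k).image n := by
      intro k
      induction k with
      | zero => rfl
      | succ m ih => rw [hFsucc, ih, Finset.range_add_one, Finset.image_insert]
    refine ⟨Set.range n, ?_, Set.infinite_range_of_injective hnlt.injective, Or.inr ?_⟩
    · rintro x ⟨k, rfl⟩; exact hnA k
    · intro Q hQ hQi hQS
      obtain ⟨r, hr⟩ := hS Q hQi hQS
      have hpool_big : ∀ b ∈ (seq (r+2)).1.2, r < b := by
        intro b hb
        have h1 : n (r+1) < b := hgt (r+1) b hb
        have h2 : r + 1 ≤ n (r+1) := hnlt.le_apply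
        omega
      have hsfin : (Q ∩ Set.Iic r).Finite := (Set.finite_Iic r).subset Set.inter_subset_right
      have hsF : hsfin.toFinset ⊆ (seq (r+2)).1.1 := by
        intro x hx
        rw [hsfin.mem_toFinset] at hx
        obtain ⟨hxQ, hxr⟩ := hx
        obtain ⟨l, rfl⟩ := hQ hxQ
        have h2 : r + 1 ≤ n (r+1) := hnlt.le_apply
        have hl : l < r + 2 := by
          by_contra hcon
          have h3 : n (r+1) ≤ n l := hnlt.monotone (show r+1 ≤ l by omega)
          have h4 : r < n l := by omega
          exact absurd hxr (not_le.mpr h4)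
        rw [hF (r+2)]
        exact Finset.mem_image.mpr ⟨l, Finset.mem_range.mpr hl, rfl⟩
      have hacc' : Acpt S hsfin.toFinset ((seq (r+2)).1.2) := by
        intro Q' hQ' hQ'i
        apply hr _ (hQ'i.mono Set.subset_union_right)
        intro i hi
        simp only [Set.mem_union, Finset.mem_coe, hsfin.mem_toFinset, Set.mem_inter_iff,
          Set.mem_Iic]
        constructor
        · rintro (⟨hiQ, _⟩ | hiQ')
          · exact hiQ
          · exact absurd hi (not_le.mpr (hpool_big i (hQ' hiQ')))
        · intro hiQ
          exact Or.inl ⟨hiQ, hi⟩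
      exact (seq (r+2)).2.2.2 hsfin.toFinset hsF _ subset_rfl (seq (r+2)).2.1 hacc'

lemma gp_multi {ι : Type*} (E : Finset ι) (Sf : ι → Set (Set ℕ)) :
    ∀ {A : Set ℕ}, A.Infinite →
    (∀ i ∈ E, ∀ P : Set ℕ, P.Infinite → P ∈ Sf i → ∃ r, ∀ Q : Set ℕ, Q.Infinite →
      (∀ m ≤ r, (m ∈ Q ↔ m ∈ P)) → Q ∈ Sf i) →
    ∃ B, B ⊆ A ∧ B.Infinite ∧ ∀ i ∈ E,
      ((∀ Q, Q ⊆ B → Q.Infinite → Q ∈ Sf i) ∨ (∀ Q, Q ⊆ B → Q.Infinite → Q ∉ Sf i)) := by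
  classical
  induction E using Finset.induction_on with
  | empty => exact fun hA _ => ⟨_, subset_rfl, hA, by simp⟩
  | insert i₀ E' hnotmem ih =>
    intro A hA hS
    obtain ⟨B₀, h1, h2, h3⟩ := gp (hS i₀ (Finset.mem_insert_self _ _)) A hA
    obtain ⟨B, g1, g2, g3⟩ := ih h2 (fun i hi => hS i (Finset.mem_insert_of_mem hi))
    refine ⟨B, g1.trans h1, g2, ?_⟩
    intro i hi
    rcases Finset.mem_insert.mp hi with rfl | hi
    · rcases h3 with h | h
      · exact Or.inl fun Q hQ hQi => h Q (hQ.trans g1) hQi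
      · exact Or.inr fun Q hQ hQi => h Q (hQ.trans g1) hQi
    · exact g3 i hi

end GP

section Main

variable (f : {M : Set ℕ // M.Infinite} → ℕ → ℝ)

lemma step_ex
    (hcont : ∀ (M : {M : Set ℕ // M.Infinite}) (i : ℕ) (ε : ℝ), 0 < ε →
      ∃ r : ℕ, ∀ L, (∀ n ≤ r, (n ∈ L.1 ↔ n ∈ M.1)) → |f L i - f M i| < ε)
    (hcluster : ∀ u : ℕ → {M : Set ℕ // M.Infinite},
      ∃ x : ℕ → ℝ, Tendsto x atTop (nhds 0) ∧ MapClusterPt x atTop (fun n => f (u n)))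
    (F : Finset ℕ) (A : Set ℕ) (hA : A.Infinite) (δ : ℝ) (hδ : 0 < δ) :
    ∃ n ∈ A, ∃ B, B ⊆ A ∧ B.Infinite ∧ (∀ b ∈ B, n < b) ∧
      ∀ τ ∈ F.powerset, ∀ P' : Set ℕ, P' ⊆ B → P'.Infinite →
        ∀ h : ((↑τ : Set ℕ) ∪ P').Infinite, |f ⟨↑τ ∪ P', h⟩ n| ≤ δ := by
  classical
  set Sf : Finset ℕ → ℕ → Set (Set ℕ) := fun τ n =>
    {Q | ∃ h : ((↑τ : Set ℕ) ∪ Q).Infinite, δ < |f ⟨↑τ ∪ Q, h⟩ n|} with hSdef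
  have hSopen : ∀ τ n, ∀ P : Set ℕ, P.Infinite → P ∈ Sf τ n → ∃ r, ∀ Q : Set ℕ, Q.Infinite →
      (∀ m ≤ r, (m ∈ Q ↔ m ∈ P)) → Q ∈ Sf τ n := by
    rintro τ n P hPi ⟨hP, hlt⟩
    obtain ⟨r, hr⟩ := hcont ⟨↑τ ∪ P, hP⟩ n (|f ⟨↑τ ∪ P, hP⟩ n| - δ) (by linarith)
    refine ⟨r, fun Q hQi hag => ?_⟩
    have hQ : ((↑τ : Set ℕ) ∪ Q).Infinite := hQi.mono Set.subset_union_right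
    refine ⟨hQ, ?_⟩
    have h2 := hr ⟨↑τ ∪ Q, hQ⟩ (fun i hi => by
      simp only [Set.mem_union]
      rw [hag i hi])
    have h3 : |f ⟨↑τ ∪ P, hP⟩ n| - |f ⟨↑τ ∪ Q, hQ⟩ n| ≤ |f ⟨↑τ ∪ Q, hQ⟩ n - f ⟨↑τ ∪ P, hP⟩ n| := by
      rw [abs_sub_comm]
      exact abs_sub_abs_le_abs_sub _ _
    linarith
  by_contra hbad
  push_neg at hbad
  have istepEx : ∀ C : Set ℕ, C.Infinite → C ⊆ A →
      ∃ D τ, D ⊆ C ∧ D.Infinite ∧ (∀ b ∈ D, sInf C < b) ∧ τ ∈ F.powerset ∧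
        ∀ Q, Q ⊆ D → Q.Infinite → ∀ h : ((↑τ : Set ℕ) ∪ Q).Infinite,
          δ < |f ⟨↑τ ∪ Q, h⟩ (sInf C)| := by
    intro C hC hCA
    obtain ⟨B₀, hB₀sub, hB₀i, hhom⟩ := gp_multi F.powerset (fun τ => Sf τ (sInf C))
      (inter_Ioi_infinite hC (sInf C)) (fun τ _ => hSopen τ (sInf C))
    have hB₀A : B₀ ⊆ A := hB₀sub.trans (Set.inter_subset_left.trans hCA)
    obtain ⟨τ, hτ, P', hP'B, hP'i, hh, hheavy⟩ := hbad (sInf C) (hCA (Nat.sInf_mem hC.nonempty))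
      B₀ hB₀A hB₀i (fun b hb => (hB₀sub hb).2)
    have hall : ∀ Q, Q ⊆ B₀ → Q.Infinite → Q ∈ Sf τ (sInf C) := by
      rcases hhom τ hτ with h | h
      · exact h
      · exact absurd (⟨hh, hheavy⟩ : P' ∈ Sf τ (sInf C)) (h P' hP'B hP'i)
    refine ⟨B₀, τ, hB₀sub.trans Set.inter_subset_left, hB₀i,
      fun b hb => (hB₀sub hb).2, hτ, fun Q hQ hQi h => ?_⟩
    obtain ⟨h', hlt⟩ := hall Q hQ hQi
    exact hlt
  let T := {C : Set ℕ // C.Infinite ∧ C ⊆ A}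
  have stepEx : ∀ st : T, ∃ D τ, D ⊆ st.1 ∧ D.Infinite ∧ (∀ b ∈ D, sInf st.1 < b) ∧
      τ ∈ F.powerset ∧ ∀ Q, Q ⊆ D → Q.Infinite → ∀ h : ((↑τ : Set ℕ) ∪ Q).Infinite,
        δ < |f ⟨↑τ ∪ Q, h⟩ (sInf st.1)| :=
    fun st => istepEx st.1 st.2.1 st.2.2
  let Dfun : T → Set ℕ := fun st => (stepEx st).choose
  let τfun : T → Finset ℕ := fun st => (stepEx st).choose_spec.choose
  have spec : ∀ st : T, Dfun st ⊆ st.1 ∧ (Dfun st).Infinite ∧ (∀ b ∈ Dfun st, sInf st.1 < b) ∧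
      τfun st ∈ F.powerset ∧ ∀ Q, Q ⊆ Dfun st → Q.Infinite →
        ∀ h : ((↑(τfun st) : Set ℕ) ∪ Q).Infinite, δ < |f ⟨↑(τfun st) ∪ Q, h⟩ (sInf st.1)| :=
    fun st => (stepEx st).choose_spec.choose_spec
  let step : T → T := fun st => ⟨Dfun st, (spec st).2.1, (spec st).1.trans st.2.2⟩
  let seq : ℕ → T := fun k => Nat.rec ⟨A, hA, subset_rfl⟩ (fun _ st => step st) k
  set n : ℕ → ℕ := fun k => sInf (seq k).1 with hndef
  set τk : ℕ → Finset ℕ := fun k => τfun (seq k) with hτdef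
  have hmem : ∀ k, n k ∈ (seq k).1 := fun k => Nat.sInf_mem (seq k).2.1.nonempty
  have hsub : ∀ k, (seq (k+1)).1 ⊆ (seq k).1 := fun k => (spec (seq k)).1
  have hchain : ∀ i k, i ≤ k → (seq k).1 ⊆ (seq i).1 := by
    intro i k hik
    induction k, hik using Nat.le_induction with
    | base => exact subset_rfl
    | succ m hm ih => exact (hsub m).trans ih
  have hnlt : StrictMono n := strictMono_nat_of_lt_succ fun k => (spec (seq k)).2.2.1 _ (hmem (k+1))
  have heavyAll : ∀ k, ∀ Q, Q ⊆ (seq (k+1)).1 → Q.Infinite →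
      ∀ h : ((↑(τk k) : Set ℕ) ∪ Q).Infinite, δ < |f ⟨↑(τk k) ∪ Q, h⟩ (n k)| :=
    fun k => (spec (seq k)).2.2.2.2
  have hτmem : ∀ k, τk k ∈ F.powerset := fun k => (spec (seq k)).2.2.2.1
  obtain ⟨τs, hJ⟩ : ∃ τs, {k | τk k = τs}.Infinite := by
    by_contra hcon
    push_neg at hcon
    have h1 : (Set.univ : Set ℕ) ⊆ ⋃ τ ∈ F.powerset, {k | τk k = τ} := fun k _ =>
      Set.mem_biUnion (hτmem k) rfl
    exact Set.infinite_univ ((Set.Finite.biUnion (F.powerset).finite_toSet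
      (fun τ _ => hcon τ)).subset h1)
  have hJ' : (setOf fun k => τk k = τs).Infinite := hJ
  set e : ℕ → ℕ := fun i => Nat.nth (fun k => τk k = τs) i with hedef
  have he_mem : ∀ i, τk (e i) = τs := fun i => Nat.nth_mem_of_infinite hJ' i
  have he_mono : StrictMono e := Nat.nth_strictMono hJ'
  have hTinf : ∀ i, (n '' Set.Ioi (e i)).Infinite :=
    fun i => (Set.Ioi_infinite (e i)).image hnlt.injective.injOn
  let u : ℕ → {M : Set ℕ // M.Infinite} := fun i =>
    ⟨(↑τs : Set ℕ) ∪ (n '' Set.Ioi (e i)), (hTinf i).mono Set.subset_union_right⟩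
  have hpers : ∀ i m, i ≤ m → δ < |f (u m) (n (e i))| := by
    intro i m him
    have hQsub : n '' Set.Ioi (e m) ⊆ (seq (e i + 1)).1 := by
      rintro x ⟨l, hl, rfl⟩
      have hl' : e m < l := hl
      have h1 : e i + 1 ≤ l := by
        have h2 : e i ≤ e m := he_mono.monotone him
        omega
      exact hchain (e i + 1) l h1 (hmem l)
    have hh : ((↑(τk (e i)) : Set ℕ) ∪ (n '' Set.Ioi (e m))).Infinite := by
      rw [he_mem i]
      exact (u m).2
    have hx := heavyAll (e i) _ hQsub (hTinf m) hh
    have hEq : f ⟨(↑(τk (e i)) : Set ℕ) ∪ (n '' Set.Ioi (e m)), hh⟩ = f (u m) :=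
      congrArg f (Subtype.ext
        (congrArg (fun t : Finset ℕ => (↑t : Set ℕ) ∪ (n '' Set.Ioi (e m))) (he_mem i)))
    rw [hEq] at hx
    exact hx
  obtain ⟨x, hx0, hxc⟩ := hcluster u
  have hxbig : ∀ i, δ/2 < |x (n (e i))| := by
    intro i
    have hV : {g : ℕ → ℝ | |g (n (e i)) - x (n (e i))| < δ/2} ∈ 𝓝 x := by
      refine Filter.mem_of_superset (ContinuousAt.preimage_mem_nhds
        (continuous_apply (n (e i))).continuousAt
        (Metric.ball_mem_nhds (x (n (e i))) (ε := δ/2) (by positivity))) ?_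
      intro g hg
      simpa [Metric.mem_ball, Real.dist_eq] using hg
    have hfreq : ∃ᶠ m in atTop, f (u m) ∈ {g : ℕ → ℝ | |g (n (e i)) - x (n (e i))| < δ/2} :=
      mapClusterPt_iff_frequently.mp hxc _ hV
    obtain ⟨m, hm1, hm2⟩ := (hfreq.and_eventually (eventually_ge_atTop i)).exists
    have h2 := hpers i m hm2
    have h3 : |f (u m) (n (e i))| - |x (n (e i))| ≤ |f (u m) (n (e i)) - x (n (e i))| :=
      abs_sub_abs_le_abs_sub _ _
    have h4 : |f (u m) (n (e i)) - x (n (e i))| < δ/2 := hm1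
    linarith
  obtain ⟨K, hK⟩ := Metric.tendsto_atTop.mp hx0 (δ/2) (by positivity)
  have h5 := hxbig K
  have h6 : dist (x (n (e K))) 0 < δ/2 :=
    hK (n (e K)) (le_trans he_mono.le_apply hnlt.le_apply)
  have h7 : |x (n (e K))| < δ/2 := by rwa [Real.dist_eq, sub_zero] at h6
  linarith

end Main

end SupportStab

open SupportStab

/-- Support stabilization lemma.  `f` maps infinite subsets of ℕ (product topology from
`2^ℕ`) to `c₀` with the topology of pointwise convergence; continuity is expressed via
the standard basis of both topologies.  Every sequence in the image of `f` is assumed to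
have a cluster point (for pointwise convergence, i.e. in `ℕ → ℝ` with the product
topology) which lies in `c₀`.  The conclusion `∑_{i ∈ N \ P} |f_P(i)| ≤ ε` is expressed
via all finite partial sums. -/
theorem support_stabilization
    (f : {M : Set ℕ // M.Infinite} → ℕ → ℝ)
    (hc0 : ∀ M, Tendsto (f M) atTop (nhds 0))
    (hcont : ∀ (M : {M : Set ℕ // M.Infinite}) (i : ℕ) (ε : ℝ), 0 < ε →
      ∃ r : ℕ, ∀ L, (∀ n ≤ r, (n ∈ L.1 ↔ n ∈ M.1)) → |f L i - f M i| < ε)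
    (hcluster : ∀ u : ℕ → {M : Set ℕ // M.Infinite},
      ∃ x : ℕ → ℝ, Tendsto x atTop (nhds 0) ∧ MapClusterPt x atTop (fun n => f (u n))) :
    ∀ ε : ℝ, 0 < ε → ∀ M : {M : Set ℕ // M.Infinite},
      ∃ N : {N : Set ℕ // N.Infinite}, N.1 ⊆ M.1 ∧
        ∀ P : {P : Set ℕ // P.Infinite}, P.1 ⊆ N.1 →
          ∀ s : Finset ℕ, (↑s : Set ℕ) ⊆ N.1 \ P.1 → ∑ i ∈ s, |f P i| ≤ ε := by
  intro ε hε M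
  classical
  let T := {p : Finset ℕ × Set ℕ // p.2.Infinite ∧ p.2 ⊆ M.1 ∧ (↑p.1 : Set ℕ) ⊆ M.1}
  have stepEx : ∀ (k : ℕ) (st : T), ∃ (m : ℕ) (B : Set ℕ), m ∈ st.1.2 ∧ B ⊆ st.1.2 ∧
      B.Infinite ∧ (∀ b ∈ B, m < b) ∧ ∀ τ ∈ st.1.1.powerset, ∀ P' : Set ℕ, P' ⊆ B →
        P'.Infinite → ∀ h : ((↑τ : Set ℕ) ∪ P').Infinite,
          |f ⟨↑τ ∪ P', h⟩ m| ≤ ε * (1/2)^(k+1) := by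
    intro k st
    obtain ⟨m, hm, B, h1, h2, h3, h4⟩ := step_ex f hcont hcluster st.1.1 st.1.2 st.2.1
      (ε * (1/2)^(k+1)) (by positivity)
    exact ⟨m, B, hm, h1, h2, h3, h4⟩
  let mfun : ℕ → T → ℕ := fun k st => (stepEx k st).choose
  let Bfun : ℕ → T → Set ℕ := fun k st => (stepEx k st).choose_spec.choose
  have spec : ∀ k st, mfun k st ∈ st.1.2 ∧ Bfun k st ⊆ st.1.2 ∧ (Bfun k st).Infinite ∧
      (∀ b ∈ Bfun k st, mfun k st < b) ∧ ∀ τ ∈ st.1.1.powerset, ∀ P' : Set ℕ,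
        P' ⊆ Bfun k st → P'.Infinite → ∀ h : ((↑τ : Set ℕ) ∪ P').Infinite,
          |f ⟨↑τ ∪ P', h⟩ (mfun k st)| ≤ ε * (1/2)^(k+1) :=
    fun k st => (stepEx k st).choose_spec.choose_spec
  let step : ℕ → T → T := fun k st => ⟨(insert (mfun k st) st.1.1, Bfun k st),
    (spec k st).2.2.1, (spec k st).2.1.trans st.2.2.1, by
      rw [Finset.coe_insert]
      exact Set.insert_subset (st.2.2.1 ((spec k st).1)) st.2.2.2⟩
  let seq : ℕ → T := fun k => Nat.rec ⟨(∅, M.1), M.2, subset_rfl, by simp⟩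
    (fun k st => step k st) k
  set n : ℕ → ℕ := fun k => mfun k (seq k) with hndef
  have hmem : ∀ k, n k ∈ (seq k).1.2 := fun k => (spec k (seq k)).1
  have hsub : ∀ k, (seq (k+1)).1.2 ⊆ (seq k).1.2 := fun k => (spec k (seq k)).2.1
  have hgt : ∀ k, ∀ b ∈ (seq (k+1)).1.2, n k < b := fun k => (spec k (seq k)).2.2.2.1
  have hchain : ∀ i k, i ≤ k → (seq k).1.2 ⊆ (seq i).1.2 := by
    intro i k hik
    induction k, hik using Nat.le_induction with
    | base => exact subset_rfl
    | succ m hm ih => exact (hsub m).trans ih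
  have hnlt : StrictMono n := strictMono_nat_of_lt_succ fun k => hgt k _ (hmem (k+1))
  have hF : ∀ k, (seq k).1.1 = (Finset.range k).image n := by
    intro k
    induction k with
    | zero => rfl
    | succ m ih =>
      have : (seq (m+1)).1.1 = insert (n m) (seq m).1.1 := rfl
      rw [this, ih, Finset.range_add_one, Finset.image_insert]
  have light : ∀ k, ∀ τ ∈ ((Finset.range k).image n).powerset, ∀ P' : Set ℕ,
      P' ⊆ (seq (k+1)).1.2 → P'.Infinite → ∀ h : ((↑τ : Set ℕ) ∪ P').Infinite,
        |f ⟨↑τ ∪ P', h⟩ (n k)| ≤ ε * (1/2)^(k+1) := by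
    intro k
    rw [← hF k]
    exact (spec k (seq k)).2.2.2.2
  have hNM : Set.range n ⊆ M.1 := by
    rintro x ⟨k, rfl⟩
    exact (seq k).2.2.1 (hmem k)
  refine ⟨⟨Set.range n, Set.infinite_range_of_injective hnlt.injective⟩, hNM, ?_⟩
  intro P hP s hs
  have key : ∀ k, n k ∉ P.1 → |f P (n k)| ≤ ε * (1/2)^(k+1) := by
    intro k hk
    have hτfin : (P.1 ∩ Set.Iio (n k)).Finite :=
      (Set.finite_Iio (n k)).subset Set.inter_subset_right
    have hτsub : hτfin.toFinset ⊆ (Finset.range k).image n := by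
      intro x hx
      rw [hτfin.mem_toFinset] at hx
      obtain ⟨hxP, hxlt⟩ := hx
      obtain ⟨l, rfl⟩ := hP hxP
      exact Finset.mem_image.mpr ⟨l, Finset.mem_range.mpr (hnlt.lt_iff_lt.mp hxlt), rfl⟩
    have hP'sub : P.1 ∩ Set.Ioi (n k) ⊆ (seq (k+1)).1.2 := by
      rintro x ⟨hxP, hxgt⟩
      obtain ⟨l, rfl⟩ := hP hxP
      have h1 : n k < n l := hxgt
      exact hchain (k+1) l (hnlt.lt_iff_lt.mp h1) (hmem l)
    have hP'i : (P.1 ∩ Set.Ioi (n k)).Infinite := inter_Ioi_infinite P.2 (n k)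
    have hunion : (↑hτfin.toFinset : Set ℕ) ∪ (P.1 ∩ Set.Ioi (n k)) = P.1 := by
      ext x
      simp only [Set.mem_union, Set.Finite.coe_toFinset, Set.mem_inter_iff, Set.mem_Iio,
        Set.mem_Ioi]
      constructor
      · rintro (⟨h1, _⟩ | ⟨h1, _⟩) <;> exact h1
      · intro hx
        rcases lt_trichotomy x (n k) with h | h | h
        · exact Or.inl ⟨hx, h⟩
        · exact absurd (h ▸ hx) hk
        · exact Or.inr ⟨hx, h⟩
    have hh : ((↑hτfin.toFinset : Set ℕ) ∪ (P.1 ∩ Set.Ioi (n k))).Infinite := by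
      rw [hunion]; exact P.2
    have hlight := light k hτfin.toFinset (Finset.mem_powerset.mpr hτsub) _ hP'sub hP'i hh
    have heq : (⟨(↑hτfin.toFinset : Set ℕ) ∪ (P.1 ∩ Set.Ioi (n k)), hh⟩ :
        {M : Set ℕ // M.Infinite}) = P := Subtype.ext hunion
    rwa [heq] at hlight
  have hidx : ∀ i ∈ s, ∃ k, n k = i := by
    intro i hi
    exact (hs (Finset.mem_coe.mpr hi)).1
  let g : ℕ → ℕ := fun i => if h : ∃ k, n k = i then h.choose else 0
  have hg : ∀ i ∈ s, n (g i) = i := by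
    intro i hi
    have h := hidx i hi
    have : g i = h.choose := dif_pos h
    rw [this]
    exact h.choose_spec
  have hkey2 : ∀ i ∈ s, |f P i| ≤ ε * (1/2)^(g i + 1) := by
    intro i hi
    have h1 := hg i hi
    have h2 : n (g i) ∉ P.1 := by rw [h1]; exact (hs (Finset.mem_coe.mpr hi)).2
    have h3 := key (g i) h2
    rwa [h1] at h3
  have hginj : ∀ x ∈ s, ∀ y ∈ s, g x = g y → x = y := by
    intro x hx y hy hxy
    rw [← hg x hx, ← hg y hy, hxy]
  have hsum1 : ∑ i ∈ s, |f P i| ≤ ∑ i ∈ s, ε * (1/2:ℝ)^(g i + 1) := Finset.sum_le_sum hkey2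
  have hsum2 : ∑ i ∈ s, ε * (1/2:ℝ)^(g i + 1) = ∑ k ∈ s.image g, ε * (1/2:ℝ)^(k + 1) :=
    (Finset.sum_image (f := fun k => ε * (1/2:ℝ)^(k + 1)) hginj).symm
  set m := (s.image g).sup id + 1 with hmdef
  have hsum3 : ∑ k ∈ s.image g, ε * (1/2:ℝ)^(k + 1) ≤ ∑ k ∈ Finset.range m, ε * (1/2:ℝ)^(k+1) := by
    apply Finset.sum_le_sum_of_subset_of_nonneg
    · intro k hk
      exact Finset.mem_range.mpr (Nat.lt_succ_of_le (Finset.le_sup (f := id) hk))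
    · intro k _ _
      positivity
  have hsum4 : ∑ k ∈ Finset.range m, ε * (1/2:ℝ)^(k+1)
      = ε * ((1/2) * ∑ k ∈ Finset.range m, (1/2:ℝ)^k) := by
    rw [Finset.mul_sum, Finset.mul_sum]
    refine Finset.sum_congr rfl fun k _ => by ring
  have hsum5 : (1/2:ℝ) * ∑ k ∈ Finset.range m, (1/2:ℝ)^k ≤ 1 := by
    have := sum_geometric_two_le m
    linarith
  have hsum6 : ε * ((1/2) * ∑ k ∈ Finset.range m, (1/2:ℝ)^k) ≤ ε * 1 :=
    mul_le_mul_of_nonneg_left hsum5 hε.le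
  calc ∑ i ∈ s, |f P i| ≤ ∑ i ∈ s, ε * (1/2:ℝ)^(g i + 1) := hsum1
    _ = ∑ k ∈ s.image g, ε * (1/2:ℝ)^(k + 1) := hsum2
    _ ≤ ∑ k ∈ Finset.range m, ε * (1/2:ℝ)^(k+1) := hsum3
    _ = ε * ((1/2) * ∑ k ∈ Finset.range m, (1/2:ℝ)^k) := hsum4
    _ ≤ ε * 1 := hsum6
    _ = ε := mul_one ε
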